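/- Let A_f be an m×n real matrix, A_c an m×n_c real matrix, Ũ_r the matrix of top r left singular vectors of A_c, T_r = A_c⁺Ũ_rŨ_rᵀA_f the lifting operator, and let P_c·A_c(I_c,:) be a row interpolative decomposition approximation of A_c. Set Â_f = P_c·A_c(I_c,:)·T_r. Then ‖A_f − Â_f‖₂ ≤ ‖(I − Ũ_rŨ_rᵀ)A_f‖₂ + ‖A_c − P_c·A_c(I_c,:)‖₂ · ‖A_c⁺Ũ_rŨ_rᵀA_f‖₂. -/

import Mathlib

open Matrix
open scoped Matrix.Norms.L2Operator

/-- SPC-ID error split: with `T_r = A_c⁺ Ur Urᵀ A_f` the lifting operator (where `Ur`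
has orthonormal columns lying in the range of `A_c`, i.e. the top `r` left singular
vectors of `A_c`, and `Apinv` is the Moore–Penrose pseudoinverse of `A_c`), and
`P_c * A_c(I_c,:)` a row interpolative decomposition of `A_c`, the approximation
`Â_f = P_c A_c(I_c,:) T_r` satisfies
`‖A_f - Â_f‖ ≤ ‖(I - UrUrᵀ)A_f‖ + ‖A_c - P_c A_c(I_c,:)‖ ‖A_c⁺UrUrᵀA_f‖`. -/
theorem stmt5 {m n nc r k : ℕ}
    (A_f : Matrix (Fin m) (Fin n) ℝ) (A_c : Matrix (Fin m) (Fin nc) ℝ)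
    (Ur : Matrix (Fin m) (Fin r) ℝ) (hUr : Urᵀ * Ur = 1)
    (Apinv : Matrix (Fin nc) (Fin m) ℝ)
    (hp1 : A_c * Apinv * A_c = A_c) (hp2 : Apinv * A_c * Apinv = Apinv)
    (hp3 : (A_c * Apinv)ᵀ = A_c * Apinv) (hp4 : (Apinv * A_c)ᵀ = Apinv * A_c)
    (hrange : A_c * Apinv * Ur = Ur)
    (P_c : Matrix (Fin m) (Fin k) ℝ) (g : Fin k → Fin m)
    (T_r : Matrix (Fin nc) (Fin n) ℝ)
    (hT : T_r = Apinv * (Ur * Urᵀ) * A_f)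
    (Ahat : Matrix (Fin m) (Fin n) ℝ)
    (hAhat : Ahat = P_c * A_c.submatrix g id * T_r) :
    ‖A_f - Ahat‖ ≤ ‖A_f - Ur * Urᵀ * A_f‖ +
      ‖A_c - P_c * A_c.submatrix g id‖ * ‖Apinv * (Ur * Urᵀ) * A_f‖ := by
  have hAcT : A_c * T_r = Ur * Urᵀ * A_f := by
    rw [hT]
    calc A_c * (Apinv * (Ur * Urᵀ) * A_f)
        = (A_c * Apinv * Ur) * Urᵀ * A_f := by
          simp only [Matrix.mul_assoc]
      _ = Ur * Urᵀ * A_f := by rw [hrange]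
  have key : A_f - Ahat = (A_f - Ur * Urᵀ * A_f) +
      (A_c - P_c * A_c.submatrix g id) * T_r := by
    rw [hAhat, Matrix.sub_mul, hAcT]; abel
  rw [key]
  calc ‖(A_f - Ur * Urᵀ * A_f) + (A_c - P_c * A_c.submatrix g id) * T_r‖
      ≤ ‖A_f - Ur * Urᵀ * A_f‖ + ‖(A_c - P_c * A_c.submatrix g id) * T_r‖ :=
        norm_add_le _ _
    _ ≤ ‖A_f - Ur * Urᵀ * A_f‖ +
        ‖A_c - P_c * A_c.submatrix g id‖ * ‖Apinv * (Ur * Urᵀ) * A_f‖ := by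
        gcongr
        rw [hT] at *
        exact Matrix.l2_opNorm_mul _ _
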